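/- Let G be a graph, S,T ⊆ V(G) disjoint with G[S] and G[T] connected and no edges between S and T. If N(S) ∩ N(T) has size at least k, then G contains a minimal ST-separator (a minimal set disjoint from S∪T whose removal leaves no path from S to T) of size at least k. -/

import Mathlib

open SimpleGraph

/-- `Z` is an `ST`-separator: `Z` is disjoint from `S ∪ T` and in `G − Z`
there is no path from a vertex of `S` to a vertex of `T`. -/
def IsSTSep {V : Type*} (G : SimpleGraph V) (S T Z : Set V) : Prop :=
  Disjoint Z (S ∪ T) ∧
    ∀ (a b : V) (ha : a ∈ Zᶜ) (hb : b ∈ Zᶜ), a ∈ S → b ∈ T →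
      ¬ (G.induce Zᶜ).Reachable ⟨a, ha⟩ ⟨b, hb⟩

/-- `Z` is a minimal `ST`-separator: no proper subset is an `ST`-separator. -/
def IsMinSTSep {V : Type*} (G : SimpleGraph V) (S T Z : Set V) : Prop :=
  IsSTSep G S T Z ∧ ∀ Z' ⊂ Z, ¬ IsSTSep G S T Z'

/-- Open neighborhood of a vertex set. -/
def setNbhd {V : Type*} (G : SimpleGraph V) (S : Set V) : Set V :=
  {v | v ∉ S ∧ ∃ u ∈ S, G.Adj u v}

theorem stmt2 {V : Type*} [Fintype V] (G : SimpleGraph V) (S T : Set V) (k : ℕ)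
    (hd : Disjoint S T)
    (hSc : (G.induce S).Connected) (hTc : (G.induce T).Connected)
    (hE : ∀ a ∈ S, ∀ b ∈ T, ¬ G.Adj a b)
    (hk : k ≤ (setNbhd G S ∩ setNbhd G T).ncard) :
    ∃ Z : Set V, IsMinSTSep G S T Z ∧ k ≤ Z.ncard := by
  classical
  -- every ST-separator contains N(S) ∩ N(T)
  have key : ∀ Z, IsSTSep G S T Z → (setNbhd G S ∩ setNbhd G T) ⊆ Z := by
    intro Z hZ w hw
    by_contra hwZ
    obtain ⟨⟨hwS, s, hs, hws⟩, ⟨hwT, t, ht, hwt⟩⟩ := hw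
    have hsZ : s ∈ Zᶜ := fun h => Set.disjoint_left.mp hZ.1 h (Or.inl hs)
    have htZ : t ∈ Zᶜ := fun h => Set.disjoint_left.mp hZ.1 h (Or.inr ht)
    have hwZ' : w ∈ Zᶜ := hwZ
    have h1 : (G.induce Zᶜ).Adj ⟨s, hsZ⟩ ⟨w, hwZ'⟩ := hws
    have h2 : (G.induce Zᶜ).Adj ⟨w, hwZ'⟩ ⟨t, htZ⟩ := G.adj_symm hwt
    exact hZ.2 s t hsZ htZ hs ht (h1.reachable.trans h2.reachable)
  -- (S ∪ T)ᶜ is an ST-separator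
  have hsep0 : IsSTSep G S T (S ∪ T)ᶜ := by
    refine ⟨disjoint_compl_left, ?_⟩
    intro a b ha hb haS hbT hr
    obtain ⟨p⟩ := hr
    have walkS : ∀ {x y : ↑(((S ∪ T)ᶜ)ᶜ : Set V)}
        (_ : (G.induce ((S ∪ T)ᶜ)ᶜ).Walk x y), (x : V) ∈ S → (y : V) ∈ S := by
      intro x y w
      induction w with
      | nil => exact id
      | @cons x u y h p ih =>
        intro hx
        apply ih
        have hu : (u : V) ∈ S ∪ T := not_not.mp u.2
        rcases hu with hu | hu
        · exact hu
        · exact absurd (h : G.Adj (x : V) (u : V)) (hE _ hx _ hu)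
    have hbS : b ∈ S := walkS p haS
    exact Set.disjoint_left.mp hd hbS hbT
  -- extract a minimal separator by strong induction on cardinality
  have exmin : ∀ n (Z : Set V), Z.ncard ≤ n → IsSTSep G S T Z →
      ∃ Z', IsMinSTSep G S T Z' := by
    intro n
    induction n with
    | zero =>
      intro Z hn hsep
      have hZ : Z = ∅ := Set.ncard_eq_zero (Set.toFinite Z) |>.mp (Nat.le_zero.mp hn)
      subst hZ
      exact ⟨∅, hsep, fun Z' h _ => absurd (Set.subset_empty_iff.mp h.le) h.ne⟩
    | succ n ih =>
      intro Z hn hsep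
      by_cases h : ∀ Z' ⊂ Z, ¬ IsSTSep G S T Z'
      · exact ⟨Z, hsep, h⟩
      · push_neg at h
        obtain ⟨Z', hsub, hsep'⟩ := h
        have : Z'.ncard < Z.ncard := Set.ncard_lt_ncard hsub (Set.toFinite Z)
        exact ih Z' (by omega) hsep'
  obtain ⟨Z, hZ⟩ := exmin ((S ∪ T)ᶜ).ncard _ le_rfl hsep0
  refine ⟨Z, hZ, le_trans hk (Set.ncard_le_ncard (key Z hZ.1) (Set.toFinite Z))⟩
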